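/- There exist universal constants c > 0 and δ0 > 0 such that the following holds. Let G = (V, E, w) be a weighted graph with doubling dimension ddim ≥ 1. Then G admits a strong (c · ddim, δ0)-padded decomposition scheme: for every Δ > 0 there is a probability distribution D over partitions of V such that every partition in the support of D is strongly Δ-bounded, and for every z ∈ V and every 0 ≤ γ ≤ δ0, Pr_{P∼D}[B_G(z, γΔ) ⊆ P(z)] ≥ e^{-c·ddim·γ}. -/

import Mathlib

open MeasureTheory

namespace Pad

variable {V : Type*}

/-- The weight of a walk: the sum of the weights of its edges. -/
def walkWeight (w : Sym2 V → ℝ) {G : SimpleGraph V} {u v : V} (p : G.Walk u v) : ℝ :=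
  (p.darts.map fun d => w d.edge).sum

/-- Shortest-path distance in the weighted graph `(G, w)`. -/
noncomputable def wdist (w : Sym2 V → ℝ) (G : SimpleGraph V) (u v : V) : ℝ :=
  sInf {x | ∃ p : G.Walk u v, x = walkWeight w p}

/-- Distance from a vertex to a set of vertices. -/
noncomputable def wdistSet (w : Sym2 V → ℝ) (G : SimpleGraph V) (v : V) (A : Set V) : ℝ :=
  sInf {x | ∃ a ∈ A, x = wdist w G v a}

/-- The closed ball of radius `r` around `v`. -/
def ball (w : Sym2 V → ℝ) (G : SimpleGraph V) (v : V) (r : ℝ) : Set V :=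
  {u | wdist w G v u ≤ r}

/-- Weight of a walk of an induced subgraph, measured with the weights of `G`. -/
def walkWeightI (w : Sym2 V → ℝ) {G : SimpleGraph V} {C : Set V} {u v : C}
    (p : (G.induce C).Walk u v) : ℝ :=
  (p.darts.map fun d => w (Sym2.map Subtype.val d.edge)).sum

/-- The cluster `C` has strong diameter at most `Δ`: every two vertices of `C` are joined,
inside the induced subgraph `G[C]`, by a walk of weight at most `Δ`. -/
def StronglyBounded (w : Sym2 V → ℝ) (G : SimpleGraph V) (C : Set V) (Δ : ℝ) : Prop :=
  ∀ u v : C, ∃ p : (G.induce C).Walk u v, walkWeightI w p ≤ Δ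

/-- A partition of `V`, given by the map `cl` sending a vertex to its cluster. -/
structure Partition (V : Type*) where
  cl : V → Set V
  mem_cl : ∀ v, v ∈ cl v
  cl_eq : ∀ u v, u ∈ cl v → cl u = cl v

/-- A partition is strongly `Δ`-bounded if each of its clusters has strong diameter at most `Δ`. -/
def Partition.StronglyBounded (w : Sym2 V → ℝ) (G : SimpleGraph V) (P : Partition V)
    (Δ : ℝ) : Prop :=
  ∀ v : V, Pad.StronglyBounded w G (P.cl v) Δ

/-- `(G, w)` has doubling dimension `ddim`: every ball of radius `2r` can be covered by
`2 ^ ddim` balls of radius `r`. -/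
def Doubling (w : Sym2 V → ℝ) (G : SimpleGraph V) (ddim : ℝ) : Prop :=
  ∀ (x : V) (r : ℝ), 0 < r → ∃ T : Set V, T.Finite ∧ ((T.ncard : ℝ) ≤ (2 : ℝ) ^ ddim) ∧
    ball w G x (2 * r) ⊆ ⋃ y ∈ T, ball w G y r

/-- `G` has the complete graph `K_r` as a minor: there are `r` pairwise disjoint connected
branch sets with an edge of `G` between any two of them. -/
def HasCliqueMinor (G : SimpleGraph V) (r : ℕ) : Prop :=
  ∃ B : Fin r → Set V,
    (∀ i, (G.induce (B i)).Connected) ∧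
    (Pairwise fun i j => Disjoint (B i) (B j)) ∧
    ∀ i j : Fin r, i ≠ j → ∃ u ∈ B i, ∃ v ∈ B j, G.Adj u v

/-- A shortest path: a path whose weight equals the distance between its endpoints. -/
def IsShortestPath (w : Sym2 V → ℝ) (G : SimpleGraph V) {u v : V} (p : G.Walk u v) : Prop :=
  p.IsPath ∧ walkWeight w p = wdist w G u v

/-- `G` has an `r`-core with radius `Δ`: there are at most `r` shortest paths such that every
vertex is within distance `Δ` of their union. -/
def HasCore (w : Sym2 V → ℝ) (G : SimpleGraph V) (r : ℕ) (Δ : ℝ) : Prop :=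
  ∃ r' : ℕ, r' ≤ r ∧ ∃ (a b : Fin r' → V) (p : ∀ i, G.Walk (a i) (b i)),
    (∀ i, IsShortestPath w G (p i)) ∧
    ∀ v : V, ∃ i, ∃ u ∈ (p i).support, wdist w G v u ≤ Δ

end Pad
namespace PadAux
open Pad SimpleGraph

variable {V : Type*} {G : SimpleGraph V} {w : Sym2 V → ℝ}

lemma walkWeight_eq_edges_sum {u v : V} (p : G.Walk u v) :
    walkWeight w p = (p.edges.map w).sum := by
  simp [walkWeight, Walk.edges, List.map_map]; rfl

lemma walkWeight_nonneg (hw : ∀ e, 0 ≤ w e) {u v : V} (p : G.Walk u v) :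
    0 ≤ walkWeight w p := by
  rw [walkWeight_eq_edges_sum]
  apply List.sum_nonneg
  intro x hx
  obtain ⟨e, _, rfl⟩ := List.mem_map.1 hx
  exact hw e

lemma walkWeight_append {u v x : V} (p : G.Walk u v) (q : G.Walk v x) :
    walkWeight w (p.append q) = walkWeight w p + walkWeight w q := by
  simp [walkWeight, Walk.darts_append]

lemma walkWeight_reverse {u v : V} (p : G.Walk u v) :
    walkWeight w p.reverse = walkWeight w p := by
  rw [walkWeight_eq_edges_sum, walkWeight_eq_edges_sum, Walk.edges_reverse,
    List.map_reverse, List.sum_reverse]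

lemma list_sum_le_of_nodup_subset {l₁ l₂ : List (Sym2 V)} (hw : ∀ e, 0 ≤ w e)
    (hn : l₁.Nodup) (hs : l₁ ⊆ l₂) :
    (l₁.map w).sum ≤ (l₂.map w).sum := by
  classical
  have hle : (l₁ : Multiset (Sym2 V)) ≤ (l₂ : Multiset (Sym2 V)) := by
    rw [Multiset.le_iff_count]
    intro a
    by_cases ha : a ∈ l₁
    · have hnd : (l₁ : Multiset (Sym2 V)).Nodup := by exact_mod_cast hn
      have h1 := Multiset.nodup_iff_count_le_one.mp hnd a
      have h2 : 1 ≤ Multiset.count a (l₂ : Multiset (Sym2 V)) := by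
        rw [Multiset.one_le_count_iff_mem]
        exact_mod_cast hs ha
      omega
    · simp [Multiset.count_eq_zero_of_notMem, ha]
  obtain ⟨u, hu⟩ := Multiset.le_iff_exists_add.1 hle
  have : ((l₂ : Multiset (Sym2 V)).map w).sum
      = ((l₁ : Multiset (Sym2 V)).map w).sum + (u.map w).sum := by
    rw [hu, Multiset.map_add, Multiset.sum_add]
  have hms : (0:ℝ) ≤ (u.map w).sum := by
    apply Multiset.sum_nonneg
    intro x hx
    obtain ⟨e, _, rfl⟩ := Multiset.mem_map.1 hx
    exact hw e
  have h2 : ((l₁ : Multiset (Sym2 V)).map w).sum ≤ ((l₂ : Multiset (Sym2 V)).map w).sum := by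
    rw [this]; linarith
  simpa using h2

lemma walkWeight_bypass_le [DecidableEq V] (hw : ∀ e, 0 ≤ w e) {u v : V} (p : G.Walk u v) :
    walkWeight w p.bypass ≤ walkWeight w p := by
  rw [walkWeight_eq_edges_sum, walkWeight_eq_edges_sum]
  exact list_sum_le_of_nodup_subset hw (p.bypass_isPath.edges_nodup) (p.edges_bypass_subset)

section Conn
variable (G) (w)

lemma wdist_set_nonempty (hG : G.Connected) (u v : V) :
    {x | ∃ p : G.Walk u v, x = walkWeight w p}.Nonempty := by
  obtain ⟨p⟩ := hG u v
  exact ⟨walkWeight w p, p, rfl⟩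

lemma wdist_set_bddBelow (hw : ∀ e, 0 ≤ w e) (u v : V) :
    BddBelow {x | ∃ p : G.Walk u v, x = walkWeight w p} := by
  refine ⟨0, fun x hx => ?_⟩
  obtain ⟨p, rfl⟩ := hx
  exact walkWeight_nonneg hw p

lemma wdist_nonneg (hw : ∀ e, 0 ≤ w e) (u v : V) : 0 ≤ wdist w G u v := by
  apply Real.sInf_nonneg
  rintro x ⟨p, rfl⟩
  exact walkWeight_nonneg hw p

lemma wdist_le_walkWeight (hw : ∀ e, 0 ≤ w e) {u v : V} (p : G.Walk u v) :
    wdist w G u v ≤ walkWeight w p :=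
  csInf_le (wdist_set_bddBelow G w hw u v) ⟨p, rfl⟩

lemma wdist_self (hw : ∀ e, 0 ≤ w e) (u : V) : wdist w G u u = 0 := by
  have h1 := wdist_le_walkWeight G w hw (Walk.nil : G.Walk u u)
  have h2 := wdist_nonneg G w hw u u
  have : walkWeight w (Walk.nil : G.Walk u u) = 0 := by simp [walkWeight]
  linarith [h1.trans_eq this]

/-- existence of a shortest path -/
lemma exists_shortest [Fintype V] (hG : G.Connected) (hw : ∀ e, 0 ≤ w e) (u v : V) :
    ∃ p : G.Walk u v, p.IsPath ∧ walkWeight w p = wdist w G u v := by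
  classical
  have : Nonempty {p : G.Walk u v // p.IsPath} := by
    obtain ⟨p⟩ := hG u v
    exact ⟨⟨p.bypass, p.bypass_isPath⟩⟩
  obtain ⟨q, _, hq⟩ := Set.exists_min_image (Set.univ : Set {p : G.Walk u v // p.IsPath})
    (fun p => walkWeight w p.1) (Set.finite_univ) (Set.univ_nonempty)
  refine ⟨q.1, q.2, le_antisymm ?_ (wdist_le_walkWeight G w hw q.1)⟩
  apply le_csInf (wdist_set_nonempty G w hG u v)
  rintro b ⟨p, rfl⟩
  calc walkWeight w q.1 ≤ walkWeight w p.bypass := hq ⟨p.bypass, p.bypass_isPath⟩ trivial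
    _ ≤ walkWeight w p := walkWeight_bypass_le hw p

lemma wdist_triangle [Fintype V] (hG : G.Connected) (hw : ∀ e, 0 ≤ w e) (u x v : V) :
    wdist w G u v ≤ wdist w G u x + wdist w G x v := by
  obtain ⟨p, _, hp⟩ := exists_shortest G w hG hw u x
  obtain ⟨q, _, hq⟩ := exists_shortest G w hG hw x v
  calc wdist w G u v ≤ walkWeight w (p.append q) := wdist_le_walkWeight G w hw _
    _ = walkWeight w p + walkWeight w q := walkWeight_append p q
    _ = _ := by rw [hp, hq]

lemma wdist_symm (u v : V) : wdist w G u v = wdist w G v u := by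
  unfold wdist
  congr 1
  ext x
  constructor
  · rintro ⟨p, rfl⟩; exact ⟨p.reverse, (walkWeight_reverse p).symm⟩
  · rintro ⟨p, rfl⟩; exact ⟨p.reverse, (walkWeight_reverse p).symm⟩

lemma wdist_support_add [Fintype V] (hw : ∀ e, 0 ≤ w e) {u v : V} {p : G.Walk u v}
    {x : V} (hx : x ∈ p.support) :
    wdist w G u x + wdist w G x v ≤ walkWeight w p := by
  classical
  have hsplit := p.take_spec hx
  have : walkWeight w ((p.takeUntil x hx).append (p.dropUntil x hx)) = walkWeight w p := by
    rw [hsplit]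
  rw [walkWeight_append] at this
  have h1 := wdist_le_walkWeight G w hw (p.takeUntil x hx)
  have h2 := wdist_le_walkWeight G w hw (p.dropUntil x hx)
  linarith

end Conn

/-- transfer a walk whose support lies in `C` to the induced subgraph -/
lemma exists_induce_walk {C : Set V} :
    ∀ {a b : V} (p : G.Walk a b) (_ : ∀ x ∈ p.support, x ∈ C) (ha : a ∈ C) (hb : b ∈ C),
    ∃ q : (G.induce C).Walk ⟨a, ha⟩ ⟨b, hb⟩, walkWeightI w q = walkWeight w p := by
  intro a b p
  induction p with
  | nil =>
    intro _ ha hb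
    exact ⟨Walk.nil, by simp [walkWeightI, walkWeight]⟩
  | cons hadj q ih =>
    rename_i x y z
    intro hsup hx hz
    have hy : y ∈ C := hsup y (by simp [Walk.support_cons])
    obtain ⟨q', hq'⟩ := ih (fun t ht => hsup t (by simp [Walk.support_cons, ht])) hy hz
    have hadj' : (G.induce C).Adj ⟨x, hx⟩ ⟨y, hy⟩ := hadj
    refine ⟨Walk.cons hadj' q', ?_⟩
    simp only [walkWeightI, walkWeight, Walk.darts_cons, List.map_cons, List.sum_cons] at *
    rw [hq']
    rfl


attribute [local instance] Classical.propDecidable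
set_option linter.unusedSectionVars false

section Core

variable {V : Type} [Fintype V] [DecidableEq V]

/-- mass of one grid point -/
noncomputable def pmass (K : ℕ) (q : ℝ) (k : Fin (K + 1)) : ℝ :=
  (1 - q) * q ^ (k : ℕ) / (1 - q ^ (K + 1))

/-- product mass on the sample space -/
noncomputable def omass (K : ℕ) (q : ℝ) (ω : V → Fin (K + 1)) : ℝ :=
  ∏ v : V, pmass K q (ω v)

/-- score of center u -/
def score (K : ℕ) (ε : ℝ) (b : V → ℝ) (u : V) (ω : V → Fin (K + 1)) : ℝ :=
  b u + ε * ((ω u : ℕ) : ℝ)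

def Vwin (K : ℕ) (ε : ℝ) (b : V → ℝ) (N : Finset V) (u : V) (ω : V → Fin (K + 1)) : Prop :=
  ∀ v ∈ N, v ≠ u → score K ε b v ω < score K ε b u ω

def Gwin (K : ℕ) (ε t : ℝ) (b : V → ℝ) (N : Finset V) (u : V) (ω : V → Fin (K + 1)) : Prop :=
  ∀ v ∈ N, v ≠ u → score K ε b v ω + t ≤ score K ε b u ω

variable {K : ℕ} {q : ℝ}

lemma norm_pos (hq0 : 0 < q) (hq1 : q < 1) : 0 < 1 - q ^ (K + 1) := by
  have : q ^ (K + 1) < 1 := pow_lt_one₀ (le_of_lt hq0) hq1 (by omega)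
  linarith

lemma pmass_nonneg (hq0 : 0 < q) (hq1 : q < 1) (k : Fin (K + 1)) : 0 ≤ pmass K q k := by
  have h1 := norm_pos (K := K) hq0 hq1
  have h2 : (0:ℝ) ≤ q ^ (k:ℕ) := pow_nonneg (le_of_lt hq0) _
  have h3 : (0:ℝ) ≤ 1 - q := by linarith
  unfold pmass
  positivity

lemma pmass_sum (hq0 : 0 < q) (hq1 : q < 1) : ∑ k : Fin (K + 1), pmass K q k = 1 := by
  have h1 := norm_pos (K := K) hq0 hq1
  have hgeom : ∑ i ∈ Finset.range (K + 1), q ^ i = (q ^ (K + 1) - 1) / (q - 1) :=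
    geom_sum_eq (by intro h; rw [h] at hq1; linarith) (K + 1)
  unfold pmass
  rw [Fin.sum_univ_eq_sum_range (fun i => (1 - q) * q ^ i / (1 - q ^ (K + 1)))]
  have h2 : ∑ i ∈ Finset.range (K + 1), (1 - q) * q ^ i / (1 - q ^ (K + 1))
      = ((1 - q) / (1 - q ^ (K + 1))) * ∑ i ∈ Finset.range (K + 1), q ^ i := by
    rw [Finset.mul_sum]
    apply Finset.sum_congr rfl
    intro i _
    ring
  rw [h2, hgeom]
  have hne1 : (1 - q^(K+1)) ≠ 0 := ne_of_gt h1
  have hne2 : q - 1 ≠ 0 := sub_ne_zero.mpr (ne_of_lt hq1)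
  rw [div_mul_div_comm, div_eq_one_iff_eq (mul_ne_zero hne1 hne2)]
  ring

lemma omass_nonneg (hq0 : 0 < q) (hq1 : q < 1) (ω : V → Fin (K + 1)) : 0 ≤ omass K q ω :=
  Finset.prod_nonneg fun v _ => pmass_nonneg hq0 hq1 (ω v)

lemma omass_sum (hq0 : 0 < q) (hq1 : q < 1) :
    ∑ ω : V → Fin (K + 1), omass K q ω = 1 := by
  have h := Finset.prod_univ_sum (fun _ : V => (Finset.univ : Finset (Fin (K + 1))))
    (fun _ k => pmass K q k)
  rw [Fintype.piFinset_univ] at h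
  unfold omass
  rw [← h]
  simp [pmass_sum hq0 hq1]

/-- marginal computation for a single coordinate -/
lemma omass_marginal (hq0 : 0 < q) (hq1 : q < 1) (u : V) (S' : Finset (Fin (K + 1))) :
    ∑ ω ∈ Finset.univ.filter (fun ω : V → Fin (K + 1) => ω u ∈ S'), omass K q ω
      = ∑ k ∈ S', pmass K q k := by
  classical
  set g : V → Fin (K + 1) → ℝ :=
    fun v k => if v = u then (if k ∈ S' then pmass K q k else 0) else pmass K q k with hg
  have key : ∀ ω : V → Fin (K + 1),
      (∏ v : V, g v (ω v)) = if ω u ∈ S' then omass K q ω else 0 := by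
    intro ω
    have hsplit : (∏ v : V, g v (ω v))
        = g u (ω u) * ∏ v ∈ Finset.univ.erase u, g v (ω v) :=
      (Finset.mul_prod_erase Finset.univ (fun v => g v (ω v)) (Finset.mem_univ u)).symm
    have herase : ∏ v ∈ Finset.univ.erase u, g v (ω v)
        = ∏ v ∈ Finset.univ.erase u, pmass K q (ω v) := by
      apply Finset.prod_congr rfl
      intro v hv
      have : v ≠ u := (Finset.mem_erase.1 hv).1
      simp [hg, this]
    have homass : omass K q ω = pmass K q (ω u) * ∏ v ∈ Finset.univ.erase u, pmass K q (ω v) :=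
      (Finset.mul_prod_erase Finset.univ (fun v => pmass K q (ω v)) (Finset.mem_univ u)).symm
    by_cases h : ω u ∈ S' <;> simp only [hsplit, herase, homass] <;> simp [hg, h]
  have lhs : ∑ ω : V → Fin (K + 1), (∏ v : V, g v (ω v))
      = ∑ ω ∈ Finset.univ.filter (fun ω : V → Fin (K + 1) => ω u ∈ S'), omass K q ω := by
    rw [Finset.sum_filter]
    apply Finset.sum_congr rfl
    intro ω _
    rw [key ω]
  have rhs : ∑ ω : V → Fin (K + 1), (∏ v : V, g v (ω v)) = ∑ k ∈ S', pmass K q k := by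
    have h := Finset.prod_univ_sum (fun _ : V => (Finset.univ : Finset (Fin (K + 1))))
      (fun v k => g v k)
    rw [Fintype.piFinset_univ] at h
    rw [← h]
    have hv : ∀ v : V, ∑ k : Fin (K + 1), g v k
        = if v = u then ∑ k ∈ S', pmass K q k else 1 := by
      intro v
      by_cases hvu : v = u
      · subst hvu
        simp [hg, Finset.sum_ite_mem, Finset.univ_inter]
      · simp [hg, hvu, pmass_sum hq0 hq1]
    calc (∏ v : V, ∑ k : Fin (K + 1), g v k)
        = ∏ v : V, (if v = u then ∑ k ∈ S', pmass K q k else 1) := by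
          apply Finset.prod_congr rfl
          intro v _
          rw [hv v]
      _ = ∑ k ∈ S', pmass K q k := by
          rw [Finset.prod_ite_eq' Finset.univ u (fun _ => ∑ k ∈ S', pmass K q k)]
          simp
  rw [← lhs, rhs]

section Winner

variable {V : Type} [Fintype V] [DecidableEq V] {K : ℕ} {q ε t : ℝ} {b : V → ℝ} {N Nz : Finset V}

lemma exists_unique_winner
    (hnotie : ∀ (ω : V → Fin (K + 1)) (u v : V), u ∈ N → v ∈ N → u ≠ v →
      score K ε b u ω ≠ score K ε b v ω)
    (hN : N.Nonempty) (ω : V → Fin (K + 1)) :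
    ∃! u, u ∈ N ∧ Vwin K ε b N u ω := by
  obtain ⟨u, hu, hmax⟩ := Finset.exists_max_image N (fun v => score K ε b v ω) hN
  refine ⟨u, ⟨hu, fun v hv hvu => lt_of_le_of_ne (hmax v hv) (hnotie ω v u hv hu hvu)⟩, ?_⟩
  rintro u' ⟨hu', hwin'⟩
  by_contra hne
  exact absurd (hmax u' hu') (not_le.mpr (hwin' u hu (Ne.symm hne)))

lemma sum_PrV_eq_one (hq0 : 0 < q) (hq1 : q < 1)
    (hnotie : ∀ (ω : V → Fin (K + 1)) (u v : V), u ∈ N → v ∈ N → u ≠ v →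
      score K ε b u ω ≠ score K ε b v ω)
    (hN : N.Nonempty) (hNzN : Nz ⊆ N)
    (hfar : ∀ u ∈ N, ∀ ω : V → Fin (K + 1), Vwin K ε b N u ω → u ∈ Nz) :
    ∑ u ∈ Nz, (∑ ω ∈ Finset.univ.filter (Vwin K ε b N u), omass K q ω) = 1 := by
  have hswap : ∑ u ∈ Nz, (∑ ω ∈ Finset.univ.filter (Vwin K ε b N u), omass K q ω)
      = ∑ ω : V → Fin (K + 1), ∑ u ∈ Nz, (if Vwin K ε b N u ω then omass K q ω else 0) := by
    rw [Finset.sum_comm]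
    apply Finset.sum_congr rfl
    intro u _
    rw [Finset.sum_filter]
  rw [hswap]
  rw [← omass_sum (V := V) (K := K) hq0 hq1]
  apply Finset.sum_congr rfl
  intro ω _
  obtain ⟨u₀, ⟨hu₀N, hu₀win⟩, huniq⟩ := exists_unique_winner hnotie hN ω
  have hu₀Nz : u₀ ∈ Nz := hfar u₀ hu₀N ω hu₀win
  rw [Finset.sum_eq_single_of_mem u₀ hu₀Nz]
  · simp [hu₀win]
  · intro v hv hvne
    have : ¬ Vwin K ε b N v ω := fun hw => hvne (huniq v ⟨hNzN hv, hw⟩)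
    simp [this]

lemma PrG_ge (hq0 : 0 < q) (hq1 : q < 1) {s : ℕ} (hs1 : 1 ≤ s) (hsK : s ≤ K)
    (hεpos : 0 < ε) (hts : t ≤ ε * s) (u : V) :
    q ^ s * (∑ ω ∈ Finset.univ.filter (Vwin K ε b N u), omass K q ω)
      - (s : ℝ) * (1 - q) * q ^ (K + 1) / (1 - q ^ (K + 1))
    ≤ ∑ ω ∈ Finset.univ.filter (Gwin K ε t b N u), omass K q ω := by
  classical
  have hnorm := norm_pos (K := K) hq0 hq1
  set A := Finset.univ.filter (fun ω : V → Fin (K + 1) =>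
    Vwin K ε b N u ω ∧ (ω u : ℕ) + s ≤ K) with hA
  set B := Finset.univ.filter (fun ω : V → Fin (K + 1) =>
    Vwin K ε b N u ω ∧ ¬ ((ω u : ℕ) + s ≤ K)) with hB
  have hsplit : (∑ ω ∈ Finset.univ.filter (Vwin K ε b N u), omass K q ω)
      = ∑ ω ∈ A, omass K q ω + ∑ ω ∈ B, omass K q ω := by
    rw [← Finset.sum_filter_add_sum_filter_not (Finset.univ.filter (Vwin K ε b N u))
      (fun ω => (ω u : ℕ) + s ≤ K)]
    congr 1 <;> · congr 1; rw [Finset.filter_filter]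
  -- bound for the high part B
  set Shi := Finset.univ.filter (fun k : Fin (K + 1) => ¬ ((k : ℕ) + s ≤ K)) with hShi
  have hBle : ∑ ω ∈ B, omass K q ω ≤ ∑ k ∈ Shi, pmass K q k := by
    rw [← omass_marginal hq0 hq1 u Shi]
    apply Finset.sum_le_sum_of_subset_of_nonneg
    · intro ω hω
      rw [hB, Finset.mem_filter] at hω
      rw [Finset.mem_filter]
      refine ⟨Finset.mem_univ _, ?_⟩
      rw [hShi, Finset.mem_filter]
      exact ⟨Finset.mem_univ _, hω.2.2⟩
    · intro ω _ _
      exact omass_nonneg hq0 hq1 ω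
  have hShicard : Shi.card ≤ s := by
    have hmem : ∀ k ∈ Shi, (k : ℕ) - (K + 1 - s) ∈ Finset.range s := by
      intro k hk
      rw [hShi, Finset.mem_filter] at hk
      have h1 : (k : ℕ) ≤ K := by omega
      have h2 : ¬ ((k : ℕ) + s ≤ K) := hk.2
      rw [Finset.mem_range]
      omega
    refine le_trans (Finset.card_le_card_of_injOn (fun k : Fin (K+1) => (k : ℕ) - (K + 1 - s))
      hmem ?_) (le_of_eq (Finset.card_range s))
    intro k hk k' hk' heq
    simp only [hShi, Finset.coe_filter, Set.mem_setOf_eq] at hk hk'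
    have heq' : (k : ℕ) - (K + 1 - s) = (k' : ℕ) - (K + 1 - s) := heq
    have h1 : (k : ℕ) ≤ K := by omega
    have h1' : (k' : ℕ) ≤ K := by omega
    apply Fin.ext
    omega
  have hpm : ∀ k ∈ Shi, pmass K q k ≤ (1 - q) * q ^ (K + 1 - s) / (1 - q ^ (K + 1)) := by
    intro k hk
    rw [hShi, Finset.mem_filter] at hk
    unfold pmass
    have h3 : (0:ℝ) ≤ 1 - q := by linarith
    have hqpow : q ^ (k : ℕ) ≤ q ^ (K + 1 - s) :=
      pow_le_pow_of_le_one (le_of_lt hq0) (le_of_lt hq1) (by omega)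
    have hmain : (1 - q) * q ^ (k : ℕ) ≤ (1 - q) * q ^ (K + 1 - s) :=
      mul_le_mul_of_nonneg_left hqpow h3
    rw [div_le_div_iff₀ hnorm hnorm]
    exact mul_le_mul_of_nonneg_right hmain (le_of_lt hnorm)
  have hShile : ∑ k ∈ Shi, pmass K q k ≤ (s : ℝ) * ((1 - q) * q ^ (K + 1 - s) / (1 - q ^ (K + 1))) := by
    calc ∑ k ∈ Shi, pmass K q k
        ≤ Shi.card • ((1 - q) * q ^ (K + 1 - s) / (1 - q ^ (K + 1))) :=
          Finset.sum_le_card_nsmul _ _ _ hpm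
      _ = (Shi.card : ℝ) * ((1 - q) * q ^ (K + 1 - s) / (1 - q ^ (K + 1))) := by
          rw [nsmul_eq_mul]
      _ ≤ (s : ℝ) * ((1 - q) * q ^ (K + 1 - s) / (1 - q ^ (K + 1))) := by
          have hc : (0:ℝ) ≤ (1 - q) * q ^ (K + 1 - s) / (1 - q ^ (K + 1)) := by
            have : (0:ℝ) ≤ q ^ (K + 1 - s) := pow_nonneg (le_of_lt hq0) _
            have h3 : (0:ℝ) ≤ 1 - q := by linarith
            positivity
          exact mul_le_mul_of_nonneg_right (by exact_mod_cast hShicard) hc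
  -- the shifting injection on the low part A
  set φ : (V → Fin (K + 1)) → (V → Fin (K + 1)) := fun ω =>
    Function.update ω u ⟨min ((ω u : ℕ) + s) K, Nat.lt_succ_of_le (min_le_right _ _)⟩ with hφ
  have hφu : ∀ ω ∈ A, ((φ ω) u : ℕ) = (ω u : ℕ) + s := by
    intro ω hω
    rw [hA, Finset.mem_filter] at hω
    simp only [hφ, Function.update_self]
    exact min_eq_left hω.2.2
  have hφv : ∀ (ω : V → Fin (K + 1)) (v : V), v ≠ u → (φ ω) v = ω v := by
    intro ω v hv
    simp only [hφ]
    exact Function.update_of_ne hv _ _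
  have hφmass : ∀ ω ∈ A, omass K q (φ ω) = q ^ s * omass K q ω := by
    intro ω hω
    have e1 : omass K q (φ ω)
        = pmass K q ((φ ω) u) * ∏ v ∈ Finset.univ.erase u, pmass K q ((φ ω) v) :=
      (Finset.mul_prod_erase Finset.univ (fun v => pmass K q ((φ ω) v)) (Finset.mem_univ u)).symm
    have e2 : omass K q ω
        = pmass K q (ω u) * ∏ v ∈ Finset.univ.erase u, pmass K q (ω v) :=
      (Finset.mul_prod_erase Finset.univ (fun v => pmass K q (ω v)) (Finset.mem_univ u)).symm
    have e3 : ∏ v ∈ Finset.univ.erase u, pmass K q ((φ ω) v)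
        = ∏ v ∈ Finset.univ.erase u, pmass K q (ω v) := by
      apply Finset.prod_congr rfl
      intro v hv
      rw [hφv ω v (Finset.mem_erase.1 hv).1]
    have e4 : pmass K q ((φ ω) u) = q ^ s * pmass K q (ω u) := by
      unfold pmass
      rw [hφu ω hω, pow_add]
      ring
    rw [e1, e3, e4, e2]
    ring
  have hφG : ∀ ω ∈ A, Gwin K ε t b N u (φ ω) := by
    intro ω hω
    have hV : Vwin K ε b N u ω := by
      rw [hA, Finset.mem_filter] at hω
      exact hω.2.1
    intro v hv hvu
    have h1 : score K ε b v (φ ω) = score K ε b v ω := by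
      unfold score
      rw [hφv ω v hvu]
    have h2 : score K ε b u (φ ω) = score K ε b u ω + ε * s := by
      unfold score
      rw [hφu ω hω]
      push_cast
      ring
    rw [h1, h2]
    have := hV v hv hvu
    nlinarith [hts]
  have hφinj : ∀ ω ∈ A, ∀ ω' ∈ A, φ ω = φ ω' → ω = ω' := by
    intro ω hω ω' hω' heq
    funext v
    by_cases hvu : v = u
    · subst hvu
      have := congrFun heq v
      rw [hA, Finset.mem_filter] at hω hω'
      apply Fin.ext
      have h1 : ((φ ω) v : ℕ) = (ω v : ℕ) + s := hφu ω (by rw [hA, Finset.mem_filter]; exact hω)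
      have h2 : ((φ ω') v : ℕ) = (ω' v : ℕ) + s := hφu ω' (by rw [hA, Finset.mem_filter]; exact hω')
      have h3 : ((φ ω) v : ℕ) = ((φ ω') v : ℕ) := by rw [this]
      omega
    · have := congrFun heq v
      rwa [hφv ω v hvu, hφv ω' v hvu] at this
  have hGge : q ^ s * (∑ ω ∈ A, omass K q ω)
      ≤ ∑ ω ∈ Finset.univ.filter (Gwin K ε t b N u), omass K q ω := by
    have himg : A.image φ ⊆ Finset.univ.filter (Gwin K ε t b N u) := by
      intro x hx
      obtain ⟨ω, hω, rfl⟩ := Finset.mem_image.1 hx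
      rw [Finset.mem_filter]
      exact ⟨Finset.mem_univ _, hφG ω hω⟩
    calc q ^ s * (∑ ω ∈ A, omass K q ω)
        = ∑ ω ∈ A, omass K q (φ ω) := by
          rw [Finset.mul_sum]
          apply Finset.sum_congr rfl
          intro ω hω
          rw [hφmass ω hω]
      _ = ∑ x ∈ A.image φ, omass K q x := (Finset.sum_image hφinj).symm
      _ ≤ ∑ ω ∈ Finset.univ.filter (Gwin K ε t b N u), omass K q ω := by
          apply Finset.sum_le_sum_of_subset_of_nonneg himg
          intro ω _ _
          exact omass_nonneg hq0 hq1 ω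
  -- combine
  have hqs : (0:ℝ) < q ^ s := pow_pos hq0 s
  have hkey : q ^ s * q ^ (K + 1 - s) = q ^ (K + 1) := by
    rw [← pow_add]
    congr 1
    omega
  have hchain : q ^ s * (∑ ω ∈ B, omass K q ω)
      ≤ (s : ℝ) * (1 - q) * q ^ (K + 1) / (1 - q ^ (K + 1)) := by
    calc q ^ s * (∑ ω ∈ B, omass K q ω)
        ≤ q ^ s * ((s : ℝ) * ((1 - q) * q ^ (K + 1 - s) / (1 - q ^ (K + 1)))) := by
          apply mul_le_mul_of_nonneg_left (le_trans hBle hShile) (le_of_lt hqs)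
      _ = (s : ℝ) * (1 - q) * (q ^ s * q ^ (K + 1 - s)) / (1 - q ^ (K + 1)) := by ring
      _ = (s : ℝ) * (1 - q) * q ^ (K + 1) / (1 - q ^ (K + 1)) := by rw [hkey]
  have := hGge
  rw [hsplit]
  nlinarith [this, hchain]

/-- The main abstract probability bound. -/
lemma core_bound (hq0 : 0 < q) (hq1 : q < 1) {s : ℕ} (hs1 : 1 ≤ s) (hsK : s ≤ K)
    (hεpos : 0 < ε) (ht0 : 0 < t) (hts : t ≤ ε * s)
    (hnotie : ∀ (ω : V → Fin (K + 1)) (u v : V), u ∈ N → v ∈ N → u ≠ v →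
      score K ε b u ω ≠ score K ε b v ω)
    (hN : N.Nonempty) (hNzN : Nz ⊆ N)
    (hfar : ∀ u ∈ N, ∀ ω : V → Fin (K + 1), Vwin K ε b N u ω → u ∈ Nz)
    (padP : (V → Fin (K + 1)) → Prop)
    (hpad : ∀ (ω : V → Fin (K + 1)) (u : V), u ∈ Nz → Gwin K ε t b N u ω → padP ω) :
    q ^ s - (Nz.card : ℝ) * ((s : ℝ) * (1 - q) * q ^ (K + 1) / (1 - q ^ (K + 1)))
      ≤ ∑ ω ∈ Finset.univ.filter padP, omass K q ω := by
  classical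
  -- the gap events are disjoint and contained in the padding event
  have hdisj : (↑Nz : Set V).PairwiseDisjoint
      (fun u => Finset.univ.filter (Gwin K ε t b N u)) := by
    intro u hu u' hu' hne
    simp only [Function.onFun]
    rw [Finset.disjoint_left]
    intro ω hω hω'
    rw [Finset.mem_filter] at hω hω'
    have h1 := hω.2 u' (hNzN (by exact_mod_cast hu')) (Ne.symm hne)
    have h2 := hω'.2 u (hNzN (by exact_mod_cast hu)) hne
    linarith
  have hsub : Nz.biUnion (fun u => Finset.univ.filter (Gwin K ε t b N u))
      ⊆ Finset.univ.filter padP := by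
    intro ω hω
    obtain ⟨u, hu, hmem⟩ := Finset.mem_biUnion.1 hω
    rw [Finset.mem_filter] at hmem ⊢
    exact ⟨Finset.mem_univ _, hpad ω u hu hmem.2⟩
  have h1 : ∑ u ∈ Nz, (∑ ω ∈ Finset.univ.filter (Gwin K ε t b N u), omass K q ω)
      ≤ ∑ ω ∈ Finset.univ.filter padP, omass K q ω := by
    rw [← Finset.sum_biUnion hdisj]
    apply Finset.sum_le_sum_of_subset_of_nonneg hsub
    intro ω _ _
    exact omass_nonneg hq0 hq1 ω
  have h2 : ∑ u ∈ Nz, (q ^ s * (∑ ω ∈ Finset.univ.filter (Vwin K ε b N u), omass K q ω)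
        - (s : ℝ) * (1 - q) * q ^ (K + 1) / (1 - q ^ (K + 1)))
      ≤ ∑ u ∈ Nz, (∑ ω ∈ Finset.univ.filter (Gwin K ε t b N u), omass K q ω) := by
    apply Finset.sum_le_sum
    intro u _
    exact PrG_ge hq0 hq1 hs1 hsK hεpos hts u
  have h3 : ∑ u ∈ Nz, (q ^ s * (∑ ω ∈ Finset.univ.filter (Vwin K ε b N u), omass K q ω)
        - (s : ℝ) * (1 - q) * q ^ (K + 1) / (1 - q ^ (K + 1)))
      = q ^ s - (Nz.card : ℝ) * ((s : ℝ) * (1 - q) * q ^ (K + 1) / (1 - q ^ (K + 1))) := by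
    rw [Finset.sum_sub_distrib, ← Finset.mul_sum, sum_PrV_eq_one hq0 hq1 hnotie hN hNzN hfar,
      Finset.sum_const, nsmul_eq_mul]
    ring
  linarith

end Winner

end Core

end PadAux

section CC
namespace PadAux
open Pad SimpleGraph
attribute [local instance] Classical.propDecidable
set_option linter.unusedSectionVars false

variable {V : Type} [Fintype V] {G : SimpleGraph V} {w : Sym2 V → ℝ}

/-- existence of a maximal (r-separated) net -/
lemma exists_net (hG : G.Connected) (hw : ∀ e, 0 ≤ w e) {r : ℝ} (hr : 0 < r) :
    ∃ N : Finset V, N.Nonempty ∧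
      (∀ u ∈ N, ∀ v ∈ N, u ≠ v → r < wdist w G u v) ∧
      (∀ y : V, ∃ u ∈ N, wdist w G u y ≤ r) := by
  classical
  have hne : Nonempty V := hG.nonempty
  obtain ⟨v₀⟩ := hne
  set Fam := Finset.univ.powerset.filter
    (fun S : Finset V => ∀ u ∈ S, ∀ v ∈ S, u ≠ v → r < wdist w G u v) with hFam
  have hmem0 : ({v₀} : Finset V) ∈ Fam := by
    rw [hFam, Finset.mem_filter]
    refine ⟨Finset.mem_powerset.2 (Finset.subset_univ _), ?_⟩
    intro u hu v hv huv
    rw [Finset.mem_singleton] at hu hv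
    exact absurd (hu.trans hv.symm) huv
  obtain ⟨N, hNmem, hNmax⟩ := Finset.exists_max_image Fam (fun S => S.card) ⟨_, hmem0⟩
  rw [hFam, Finset.mem_filter] at hNmem
  have hsep := hNmem.2
  refine ⟨N, ?_, hsep, ?_⟩
  · rw [← Finset.card_pos]
    have h1 := hNmax {v₀} hmem0
    rw [Finset.card_singleton] at h1
    omega
  · intro y
    by_contra hcon
    push_neg at hcon
    have hyN : y ∉ N := by
      intro hy
      have := hcon y hy
      rw [wdist_self G w hw y] at this
      linarith
    have hins : insert y N ∈ Fam := by
      rw [hFam, Finset.mem_filter]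
      refine ⟨Finset.mem_powerset.2 (Finset.subset_univ _), ?_⟩
      intro u hu v hv huv
      rw [Finset.mem_insert] at hu hv
      rcases hu with rfl | hu
      · rcases hv with rfl | hv
        · exact absurd rfl huv
        · rw [wdist_symm]
          exact hcon v hv
      · rcases hv with rfl | hv
        · exact hcon u hu
        · exact hsep u hu v hv huv
    have hcard := hNmax _ hins
    rw [Finset.card_insert_of_notMem hyN] at hcard
    omega

/-- packing bound: an (Δ/4)-separated set inside a (Δ/2)-ball has few points -/
lemma packing_bound (hG : G.Connected) (hw : ∀ e, 0 ≤ w e) {ddim Δ : ℝ}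
    (hdoub : Pad.Doubling w G ddim) (hΔ : 0 < Δ)
    {N : Finset V} (hsep : ∀ u ∈ N, ∀ v ∈ N, u ≠ v → Δ/4 < wdist w G u v) (z : V) :
    ((N.filter (fun u => wdist w G z u ≤ Δ/2)).card : ℝ)
      ≤ (2:ℝ) ^ ddim * (2:ℝ) ^ ddim := by
  classical
  obtain ⟨T₁, hT₁fin, hT₁card, hT₁cov⟩ := hdoub z (Δ/4) (by linarith)
  have hdoub2 : ∀ y : V, ∃ T : Finset V, ((T.card : ℝ) ≤ (2:ℝ) ^ ddim) ∧
      Pad.ball w G y (Δ/4) ⊆ ⋃ x ∈ (T : Set V), Pad.ball w G x (Δ/8) := by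
    intro y
    obtain ⟨T, hfin, hcard, hcov⟩ := hdoub y (Δ/8) (by linarith)
    refine ⟨hfin.toFinset, ?_, ?_⟩
    · rw [(Set.ncard_eq_toFinset_card T hfin).symm]
      exact hcard
    · intro a ha
      have : a ∈ Pad.ball w G y (2 * (Δ/8)) := by
        have h8 : 2 * (Δ/8) = Δ/4 := by ring
        rwa [h8]
      have := hcov this
      simpa using this
  choose T₂ hT₂card hT₂cov using hdoub2
  set C : Finset V := (hT₁fin.toFinset).biUnion T₂ with hC
  -- each filtered point lies in a small ball around some point of C
  have hpt : ∀ u ∈ N.filter (fun u => wdist w G z u ≤ Δ/2),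
      ∃ x ∈ C, wdist w G x u ≤ Δ/8 := by
    intro u hu
    rw [Finset.mem_filter] at hu
    have hu2 : u ∈ Pad.ball w G z (2 * (Δ/4)) := by
      have h4 : 2 * (Δ/4) = Δ/2 := by ring
      rw [h4]
      exact hu.2
    obtain ⟨y, hyT, hy⟩ : ∃ y ∈ T₁, u ∈ Pad.ball w G y (Δ/4) := by
      have := hT₁cov hu2
      simpa using this
    obtain ⟨x, hxT, hx⟩ : ∃ x ∈ (T₂ y : Set V), u ∈ Pad.ball w G x (Δ/8) := by
      have := hT₂cov y hy
      simpa using this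
    refine ⟨x, ?_, hx⟩
    rw [hC, Finset.mem_biUnion]
    exact ⟨y, by rwa [Set.Finite.mem_toFinset], by exact_mod_cast hxT⟩
  choose cfn hcfnC hcfn using hpt
  have hinj : ∀ u (hu : u ∈ N.filter (fun u => wdist w G z u ≤ Δ/2))
      (v : V) (hv : v ∈ N.filter (fun u => wdist w G z u ≤ Δ/2)),
      cfn u hu = cfn v hv → u = v := by
    intro u hu v hv heq
    by_contra hne
    have h1 := hcfn u hu
    have h2 := hcfn v hv
    rw [heq] at h1
    have htri : wdist w G u v ≤ wdist w G u (cfn v hv) + wdist w G (cfn v hv) v :=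
      wdist_triangle G w hG hw u (cfn v hv) v
    rw [wdist_symm (u := u) (v := cfn v hv)] at htri
    have huN : u ∈ N := (Finset.mem_filter.1 hu).1
    have hvN : v ∈ N := (Finset.mem_filter.1 hv).1
    have := hsep u huN v hvN hne
    linarith
  -- cardinality chain
  have hcard1 : (N.filter (fun u => wdist w G z u ≤ Δ/2)).card ≤ C.card := by
    classical
    have := Finset.card_le_card_of_injOn
      (fun u : { x // x ∈ N.filter (fun u => wdist w G z u ≤ Δ/2) } => cfn u.1 u.2)
      (s := (N.filter (fun u => wdist w G z u ≤ Δ/2)).attach)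
      (t := C) (fun a _ => hcfnC a.1 a.2) ?_
    · rwa [Finset.card_attach] at this
    · intro a _ b _ hab
      exact Subtype.ext (hinj a.1 a.2 b.1 b.2 hab)
  have hcard2 : (C.card : ℝ) ≤ (2:ℝ) ^ ddim * (2:ℝ) ^ ddim := by
    have h1 : C.card ≤ ∑ y ∈ hT₁fin.toFinset, (T₂ y).card := Finset.card_biUnion_le
    have h2 : (∑ y ∈ hT₁fin.toFinset, ((T₂ y).card : ℝ))
        ≤ ∑ _y ∈ hT₁fin.toFinset, (2:ℝ) ^ ddim :=
      Finset.sum_le_sum (fun y _ => hT₂card y)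
    have h3 : (∑ _y ∈ hT₁fin.toFinset, ((2:ℝ) ^ ddim))
        = (hT₁fin.toFinset.card : ℝ) * (2:ℝ) ^ ddim := by
      rw [Finset.sum_const, nsmul_eq_mul]
    have h4 : ((hT₁fin.toFinset.card : ℕ) : ℝ) ≤ (2:ℝ) ^ ddim := by
      rw [(Set.ncard_eq_toFinset_card T₁ hT₁fin).symm]
      exact hT₁card
    have h5 : (0:ℝ) ≤ (2:ℝ) ^ ddim := le_of_lt (Real.rpow_pos_of_pos (by norm_num) _)
    calc (C.card : ℝ) ≤ (∑ y ∈ hT₁fin.toFinset, ((T₂ y).card : ℝ)) := by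
          exact_mod_cast le_trans (Nat.cast_le.mpr h1) (le_of_eq (by push_cast; ring))
      _ ≤ (hT₁fin.toFinset.card : ℝ) * (2:ℝ) ^ ddim := by rw [← h3]; exact h2
      _ ≤ (2:ℝ) ^ ddim * (2:ℝ) ^ ddim := mul_le_mul_of_nonneg_right h4 h5
  exact le_trans (by exact_mod_cast hcard1) hcard2

/-- choice of a generic perturbation constant -/
lemma exists_eta {K : ℕ} (dd : V → V → ℝ) (ι : V → ℕ) (hι : Function.Injective ι)
    {ε₀ ε : ℝ} (hε₀ : 0 < ε₀) :
    ∃ η : ℝ, 0 < η ∧ η < ε₀ ∧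
      ∀ (u v y : V) (j k : Fin (K+1)), u ≠ v →
        η * ((ι u : ℝ) - (ι v : ℝ)) ≠ dd u y - dd v y + ε * (((k:ℕ):ℝ) - ((j:ℕ):ℝ)) := by
  classical
  set f : V × V × V × Fin (K+1) × Fin (K+1) → ℝ := fun p =>
    (dd p.1 p.2.2.1 - dd p.2.1 p.2.2.1
      + ε * (((p.2.2.2.2 : ℕ) : ℝ) - ((p.2.2.2.1 : ℕ) : ℝ)))
    / ((ι p.1 : ℝ) - (ι p.2.1 : ℝ)) with hf
  have hbad : (Set.range f).Finite := Set.finite_range f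
  have hIoo : (Set.Ioo (0:ℝ) ε₀).Infinite := Set.Ioo_infinite hε₀
  obtain ⟨η, hη⟩ := (hIoo.diff hbad).nonempty
  rw [Set.mem_diff, Set.mem_Ioo] at hη
  refine ⟨η, hη.1.1, hη.1.2, ?_⟩
  intro u v y j k huv heq
  apply hη.2
  rw [Set.mem_range]
  refine ⟨(u, v, y, j, k), ?_⟩
  have hιne : (ι u : ℝ) - (ι v : ℝ) ≠ 0 := by
    intro h
    apply huv
    apply hι
    have : (ι u : ℝ) = (ι v : ℝ) := by linarith
    exact_mod_cast this
  rw [hf]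
  field_simp
  linarith [heq]

end PadAux
end CC

section DD
namespace PadAux
open Pad SimpleGraph
attribute [local instance] Classical.propDecidable
set_option linter.unusedSectionVars false
set_option maxHeartbeats 1000000

/-- key numerical inequality -/
lemma padnum {ddim x : ℝ} (hd : 1 ≤ ddim) (hx0 : 0 < x) (hx : x ≤ ddim / 4) :
    Real.exp (-(8 * x)) + 4 * x * Real.exp (-(4 * ddim)) ≤ Real.exp (-(2 * x)) := by
  have hsplit : Real.exp (-(8 * x)) = Real.exp (-(2 * x)) * Real.exp (-(6 * x)) := by
    rw [← Real.exp_add]; ring_nf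
  rcases le_or_gt x 1 with h1 | h1
  · -- small case
    have h6x : (0:ℝ) < 1 + 6 * x := by linarith
    have hB1 : Real.exp (-(6 * x)) * (1 + 6 * x) ≤ 1 := by
      have h := Real.add_one_le_exp (6 * x)
      have hpos := Real.exp_pos (6 * x)
      rw [Real.exp_neg, inv_mul_le_iff₀ hpos]
      linarith
    have hBpos := (Real.exp_pos (-(6 * x)))
    have h1B : 6 * x / 7 ≤ 1 - Real.exp (-(6 * x)) := by
      nlinarith [hB1, mul_nonneg hx0.le (sub_nonneg.2 h1), hBpos.le]
    have hE := Real.exp_one_gt_d9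
    have hexp2 : Real.exp 2 = Real.exp 1 * Real.exp 1 := by rw [← Real.exp_add]; norm_num
    have h14 : (14:ℝ)/3 ≤ Real.exp 2 := by nlinarith
    have key : 4 * Real.exp (-(4:ℝ)) * 7 ≤ 6 * Real.exp (-(2:ℝ)) := by
      have e4 : Real.exp (-(4:ℝ)) * Real.exp 2 = Real.exp (-(2:ℝ)) := by
        rw [← Real.exp_add]; norm_num
      nlinarith [Real.exp_pos (-(4:ℝ)), h14]
    have hAe : Real.exp (-(2:ℝ)) ≤ Real.exp (-(2 * x)) := Real.exp_le_exp.mpr (by linarith)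
    have hDe : Real.exp (-(4 * ddim)) ≤ Real.exp (-(4:ℝ)) := Real.exp_le_exp.mpr (by linarith)
    have s1 : 4 * x * Real.exp (-(4 * ddim)) ≤ 4 * x * Real.exp (-(4:ℝ)) :=
      mul_le_mul_of_nonneg_left hDe (by linarith)
    have s2 : 4 * x * Real.exp (-(4:ℝ)) ≤ (6 * x / 7) * Real.exp (-(2:ℝ)) := by
      nlinarith [mul_le_mul_of_nonneg_left key hx0.le]
    have s3 : (6 * x / 7) * Real.exp (-(2:ℝ))
        ≤ (1 - Real.exp (-(6 * x))) * Real.exp (-(2 * x)) := by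
      apply mul_le_mul h1B hAe (Real.exp_pos _).le (by nlinarith [hBpos.le])
    have s4 : (1 - Real.exp (-(6 * x))) * Real.exp (-(2 * x))
        = Real.exp (-(2 * x)) - Real.exp (-(8 * x)) := by
      rw [hsplit]; ring
    linarith
  · -- big case
    have hdd : 4 * x ≤ ddim := by linarith
    have t1 : 4 * x * Real.exp (-(4 * ddim)) ≤ 4 * x * Real.exp (-(16 * x)) := by
      apply mul_le_mul_of_nonneg_left (Real.exp_le_exp.mpr (by nlinarith)) (by linarith)
    have t2 : x * Real.exp (-(16 * x)) ≤ Real.exp (-(15 * x)) := by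
      have hxe : x ≤ Real.exp x := by linarith [Real.add_one_le_exp x]
      calc x * Real.exp (-(16 * x)) ≤ Real.exp x * Real.exp (-(16 * x)) :=
            mul_le_mul_of_nonneg_right hxe (Real.exp_pos _).le
        _ = Real.exp (-(15 * x)) := by rw [← Real.exp_add]; ring_nf
    have t3 : Real.exp (-(15 * x)) = Real.exp (-(13 * x)) * Real.exp (-(2 * x)) := by
      rw [← Real.exp_add]; ring_nf
    have t4 : Real.exp (-(13 * x)) ≤ Real.exp (-(13:ℝ)) := Real.exp_le_exp.mpr (by linarith)
    have t5 : Real.exp (-(13:ℝ)) ≤ 1/16 := by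
      have h65 : (7.5:ℝ) ≤ Real.exp 6.5 := by linarith [Real.add_one_le_exp (6.5:ℝ)]
      have h13 : Real.exp (13:ℝ) = Real.exp 6.5 * Real.exp 6.5 := by
        rw [← Real.exp_add]; norm_num
      have h16 : (16:ℝ) ≤ Real.exp 13 := by nlinarith
      rw [Real.exp_neg]
      calc (Real.exp 13)⁻¹ ≤ (16:ℝ)⁻¹ := inv_anti₀ (by norm_num) h16
        _ = 1/16 := by norm_num
    have t6 : Real.exp (-(6 * x)) ≤ 1/2 := by
      have h7 : (7:ℝ) ≤ Real.exp 6 := by linarith [Real.add_one_le_exp (6:ℝ)]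
      have : Real.exp (-(6 * x)) ≤ Real.exp (-(6:ℝ)) := Real.exp_le_exp.mpr (by linarith)
      have h2 : Real.exp (-(6:ℝ)) ≤ 1/7 := by
        rw [Real.exp_neg]
        calc (Real.exp 6)⁻¹ ≤ (7:ℝ)⁻¹ := inv_anti₀ (by norm_num) h7
          _ = 1/7 := by norm_num
      linarith
    have e2pos := (Real.exp_pos (-(2 * x))).le
    have tA : Real.exp (-(8 * x)) ≤ Real.exp (-(2 * x)) * (1/2) := by
      rw [hsplit]
      exact mul_le_mul_of_nonneg_left t6 e2pos
    have tB : 4 * x * Real.exp (-(4 * ddim)) ≤ Real.exp (-(2 * x)) * (1/4) := by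
      have : 4 * x * Real.exp (-(16 * x)) ≤ 4 * Real.exp (-(15 * x)) := by linarith [t2]
      have h2 : (4:ℝ) * Real.exp (-(15 * x)) ≤ 4 * (1/16) * Real.exp (-(2 * x)) := by
        rw [t3]
        nlinarith [t4, t5, e2pos, Real.exp_pos (-(13 * x)), Real.exp_pos (-(13:ℝ))]
      nlinarith [t1]
    nlinarith [tA, tB, Real.exp_pos (-(2*x))]

end PadAux
end DD


section EE
open Pad PadAux SimpleGraph
attribute [local instance] Classical.propDecidable
set_option maxHeartbeats 2000000
set_option linter.unusedVariables false

/-- Graphs with doubling dimension `ddim` admit a strong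
`(c·ddim, δ₀)`-padded decomposition scheme, for universal constants `c, δ₀ > 0`. -/
theorem doubling_strong_padded_decomposition_scheme :
    ∃ c δ₀ : ℝ, 0 < c ∧ 0 < δ₀ ∧
      ∀ (V : Type) [Fintype V], ∀ (G : SimpleGraph V), G.Connected →
      ∀ w : Sym2 V → ℝ, (∀ e, 0 ≤ w e) →
      ∀ ddim : ℝ, 1 ≤ ddim → Pad.Doubling w G ddim →
      ∀ Δ : ℝ, 0 < Δ →
      ∃ D : PMF (Pad.Partition V),
        (∀ P ∈ D.support, Pad.Partition.StronglyBounded w G P Δ) ∧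
        ∀ (z : V) (γ : ℝ), 0 ≤ γ → γ ≤ δ₀ →
          ENNReal.ofReal (Real.exp (-(c * ddim * γ))) ≤
            D.toOuterMeasure {P | Pad.ball w G z (γ * Δ) ⊆ P.cl z} := by
  classical
  refine ⟨768, 1/384, by norm_num, by norm_num, ?_⟩
  intro V _ G hG w hw ddim hddim hdoub Δ hΔ
  classical
  have hVne : Nonempty V := hG.nonempty
  have hddim0 : (0:ℝ) < ddim := by linarith
  -- minimum positive distance
  set P : Finset ℝ := ((Finset.univ ×ˢ Finset.univ).image
    (fun p : V × V => Pad.wdist w G p.1 p.2)).filter (fun x => 0 < x) with hP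
  set dpos : ℝ := if h : P.Nonempty then P.min' h else 1 with hdposdef
  have hdpos : 0 < dpos := by
    rw [hdposdef]
    split_ifs with h
    · have hmem := P.min'_mem h
      have hall : ∀ x ∈ P, 0 < x := by
        intro x hx
        rw [hP, Finset.mem_filter] at hx
        exact hx.2
      exact hall _ hmem
    · norm_num
  have hdmin : ∀ x y : V, 0 < Pad.wdist w G x y → dpos ≤ Pad.wdist w G x y := by
    intro x y hxy
    have hmem : Pad.wdist w G x y ∈ P := by
      rw [hP, Finset.mem_filter]
      refine ⟨Finset.mem_image.2 ⟨(x, y), by simp, rfl⟩, hxy⟩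
    have hne : P.Nonempty := ⟨_, hmem⟩
    rw [hdposdef, dif_pos hne]
    exact P.min'_le _ hmem
  -- parameters
  set K : ℕ := ⌈13 * Δ / dpos⌉₊ + 1 with hKdef
  have hKpos : 0 < K := by omega
  have hKR : (0:ℝ) < (K:ℝ) := by exact_mod_cast hKpos
  set ε : ℝ := Δ / (8 * K) with hεdef
  have hεpos : 0 < ε := by rw [hεdef]; positivity
  have hεK : ε * K = Δ / 8 := by
    rw [hεdef]
    field_simp
  have hε100 : 100 * ε ≤ dpos := by
    have h13 : 13 * Δ / dpos ≤ (K:ℝ) := by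
      refine le_trans (Nat.le_ceil _) ?_
      rw [hKdef]
      push_cast
      linarith
    have h13' : 13 * Δ ≤ (K:ℝ) * dpos := by
      rwa [div_le_iff₀ hdpos] at h13
    rw [hεdef]
    have heq : 100 * (Δ / (8 * (K:ℝ))) = (100 * Δ) / (8 * K) := by ring
    rw [heq, div_le_iff₀ (by positivity : (0:ℝ) < 8 * (K:ℝ))]
    nlinarith
  set lam : ℝ := 48 * ddim / Δ with hlamdef
  have hlam : 0 < lam := by rw [hlamdef]; positivity
  set q : ℝ := Real.exp (-(lam * ε)) with hqdef
  have hq0 : 0 < q := Real.exp_pos _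
  have hq1 : q < 1 := by
    rw [hqdef, ← Real.exp_zero]
    apply Real.exp_lt_exp.mpr
    nlinarith
  -- index injection
  set n : ℕ := Fintype.card V with hndef
  have hn : 0 < n := Fintype.card_pos
  have hnR : (0:ℝ) < (n:ℝ) := by exact_mod_cast hn
  set ι : V → ℕ := fun v => ((Fintype.equivFin V) v : ℕ) with hιdef
  have hιinj : Function.Injective ι := by
    intro a b hab
    apply (Fintype.equivFin V).injective
    exact Fin.ext hab
  have hιlt : ∀ v, ι v < n := fun v => ((Fintype.equivFin V) v).isLt
  -- net
  obtain ⟨N, hNne, hsep, hcov⟩ := exists_net hG hw (show (0:ℝ) < Δ/4 by linarith)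
  -- generic perturbation
  obtain ⟨η, hη0, hηlt, hηgen⟩ := exists_eta (K := K) (ε := ε)
    (fun u y => Pad.wdist w G u y) ι hιinj
    (ε₀ := Δ / (8 * n)) (by positivity)
  have hηb : ∀ v, η * (ι v : ℝ) ≤ Δ / 8 := by
    intro v
    have h1 : (ι v : ℝ) ≤ (n : ℝ) := by exact_mod_cast (hιlt v).le
    have h2 : η * (ι v : ℝ) ≤ η * n := mul_le_mul_of_nonneg_left h1 hη0.le
    have h3 : η * (n:ℝ) ≤ (Δ / (8 * n)) * n :=
      mul_le_mul_of_nonneg_right hηlt.le (by positivity)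
    have h4 : (Δ / (8 * n)) * (n:ℝ) = Δ / 8 := by field_simp
    linarith
  -- score base and maximizer sets
  set bf : V → V → ℝ := fun y u => Δ/4 + η * (ι u : ℝ) - Pad.wdist w G u y with hbf
  set Sm : (V → Fin (K+1)) → V → Set V := fun ω y =>
    {u | u ∈ N ∧ ∀ v ∈ N, score K ε (bf y) v ω ≤ score K ε (bf y) u ω} with hSm
  have hnotie : ∀ (y : V) (ω : V → Fin (K+1)) (u v : V), u ∈ N → v ∈ N → u ≠ v →
      score K ε (bf y) u ω ≠ score K ε (bf y) v ω := by
    intro y ω u v hu hv huv heq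
    apply hηgen u v y (ω u) (ω v) huv
    simp only [score, hbf] at heq ⊢
    linarith
  have hSuniq : ∀ ω y u u', u ∈ Sm ω y → u' ∈ Sm ω y → u = u' := by
    intro ω y u u' hu hu'
    rw [hSm, Set.mem_setOf_eq] at hu hu'
    by_contra hne
    have h1 := hu.2 u' hu'.1
    have h2 := hu'.2 u hu.1
    exact hnotie y ω u u' hu.1 hu'.1 hne (le_antisymm h2 h1)
  have hSmax : ∀ ω y, ∃ u, u ∈ Sm ω y := by
    intro ω y
    obtain ⟨u, hu, hmax⟩ := Finset.exists_max_image N (fun v => score K ε (bf y) v ω) hNne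
    exact ⟨u, by rw [hSm, Set.mem_setOf_eq]; exact ⟨hu, hmax⟩⟩
  have hSeq : ∀ ω x y u, u ∈ Sm ω x → u ∈ Sm ω y → Sm ω x = Sm ω y := by
    intro ω x y u hux huy
    ext v
    constructor
    · intro hv
      have : v = u := hSuniq ω x v u hv hux
      rwa [this]
    · intro hv
      have : v = u := hSuniq ω y v u hv huy
      rwa [this]
  have hscore0 : ∀ (ω : V → Fin (K+1)) (y u : V), u ∈ Sm ω y →
      (0:ℝ) ≤ score K ε (bf y) u ω := by
    intro ω y u hu
    rw [hSm, Set.mem_setOf_eq] at hu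
    obtain ⟨u₀, hu₀N, hu₀d⟩ := hcov y
    have h0 : (0:ℝ) ≤ score K ε (bf y) u₀ ω := by
      simp only [score, hbf]
      have h1 : (0:ℝ) ≤ η * (ι u₀ : ℝ) := by positivity
      have h2 : (0:ℝ) ≤ ε * ((ω u₀ : ℕ) : ℝ) := by positivity
      linarith
    exact le_trans h0 (hu.2 u₀ hu₀N)
  have hrad : ∀ (ω : V → Fin (K+1)) (y u : V), u ∈ Sm ω y →
      Pad.wdist w G u y ≤ Δ / 2 := by
    intro ω y u hu
    have h0 := hscore0 ω y u hu
    simp only [score, hbf] at h0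
    have h1 : η * (ι u : ℝ) ≤ Δ / 8 := hηb u
    have h2 : ε * ((ω u : ℕ) : ℝ) ≤ Δ / 8 := by
      have hle : ((ω u : ℕ) : ℝ) ≤ (K : ℝ) := by exact_mod_cast (Fin.is_le (ω u))
      calc ε * ((ω u : ℕ) : ℝ) ≤ ε * K := mul_le_mul_of_nonneg_left hle hεpos.le
        _ = Δ / 8 := hεK
    linarith
  have hchain : ∀ (ω : V → Fin (K+1)) (y x u : V), u ∈ Sm ω y →
      Pad.wdist w G u x + Pad.wdist w G x y ≤ Pad.wdist w G u y → u ∈ Sm ω x := by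
    intro ω y x u hu hle
    rw [hSm, Set.mem_setOf_eq] at hu ⊢
    refine ⟨hu.1, ?_⟩
    intro v hv
    have h1 := hu.2 v hv
    have htri : Pad.wdist w G v y ≤ Pad.wdist w G v x + Pad.wdist w G x y :=
      wdist_triangle G w hG hw v x y
    simp only [score, hbf] at h1 ⊢
    linarith
  -- the random partition
  set buildP : (V → Fin (K+1)) → Pad.Partition V := fun ω =>
    { cl := fun y => {y' | Sm ω y' = Sm ω y}
      mem_cl := fun y => rfl
      cl_eq := by
        intro a b hab
        have h : Sm ω a = Sm ω b := hab
        ext c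
        simp only [Set.mem_setOf_eq, h] } with hbuildP
  have hclP : ∀ ω y, (buildP ω).cl y = {y' | Sm ω y' = Sm ω y} := by
    intro ω y
    rw [hbuildP]
  -- strong boundedness of every partition in the support
  have hbound : ∀ ω, (buildP ω).StronglyBounded w G Δ := by
    intro ω y
    rw [Pad.StronglyBounded.eq_1]  -- maybe unnecessary
    intro a b
    obtain ⟨a, ha⟩ := a
    obtain ⟨b, hb⟩ := b
    have ha' : Sm ω a = Sm ω y := by
      have := ha
      rw [hclP ω y] at this
      exact this
    have hb' : Sm ω b = Sm ω y := by
      have := hb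
      rw [hclP ω y] at this
      exact this
    obtain ⟨u, hu⟩ := hSmax ω y
    have hua : u ∈ Sm ω a := by rw [ha']; exact hu
    have hub : u ∈ Sm ω b := by rw [hb']; exact hu
    have hda : Pad.wdist w G u a ≤ Δ / 2 := hrad ω a u hua
    have hdb : Pad.wdist w G u b ≤ Δ / 2 := hrad ω b u hub
    obtain ⟨pa, hpaP, hpaW⟩ := exists_shortest G w hG hw u a
    obtain ⟨pb, hpbP, hpbW⟩ := exists_shortest G w hG hw u b
    have hsup : ∀ x ∈ (pa.reverse.append pb).support, x ∈ (buildP ω).cl y := by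
      intro x hx
      rw [SimpleGraph.Walk.support_append, List.mem_append] at hx
      have hx' : x ∈ pa.support ∨ x ∈ pb.support := by
        rcases hx with h | h
        · left; rwa [SimpleGraph.Walk.support_reverse, List.mem_reverse] at h
        · right; exact List.tail_subset _ h
      rw [hclP ω y]
      show Sm ω x = Sm ω y
      rcases hx' with h | h
      · have h2 := wdist_support_add G w hw (p := pa) h
        rw [hpaW] at h2
        exact hSeq ω x y u (hchain ω a x u hua h2) hu
      · have h2 := wdist_support_add G w hw (p := pb) h
        rw [hpbW] at h2
        exact hSeq ω x y u (hchain ω b x u hub h2) hu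
    obtain ⟨qq, hqqW⟩ := exists_induce_walk (pa.reverse.append pb) hsup ha hb
    refine ⟨qq, ?_⟩
    rw [hqqW, walkWeight_append, walkWeight_reverse, hpaW, hpbW]
    linarith
  -- the PMF
  have hsum1 : ∑ ω : V → Fin (K+1), ENNReal.ofReal (omass K q ω) = 1 := by
    rw [← ENNReal.ofReal_sum_of_nonneg (fun ω _ => omass_nonneg hq0 hq1 ω)]
    rw [omass_sum hq0 hq1, ENNReal.ofReal_one]
  refine ⟨(PMF.ofFintype (fun ω => ENNReal.ofReal (omass K q ω)) hsum1).map buildP, ?_, ?_⟩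
  · intro Pp hPp
    rw [PMF.support_map] at hPp
    obtain ⟨ω, _, rfl⟩ := hPp
    exact hbound ω
  · intro z γ hγ0 hγδ
    have hmeas : ((PMF.ofFintype (fun ω => ENNReal.ofReal (omass K q ω)) hsum1).map
          buildP).toOuterMeasure {Pp : Pad.Partition V | Pad.ball w G z (γ * Δ) ⊆ Pp.cl z}
        = ENNReal.ofReal (∑ ω ∈ Finset.univ.filter
            (fun ω => Pad.ball w G z (γ * Δ) ⊆ (buildP ω).cl z), omass K q ω) := by
      rw [PMF.toOuterMeasure_map_apply, PMF.toOuterMeasure_apply, tsum_fintype]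
      rw [ENNReal.ofReal_sum_of_nonneg (fun ω _ => omass_nonneg hq0 hq1 ω)]
      rw [Finset.sum_filter]
      apply Finset.sum_congr rfl
      intro ω _
      by_cases h : Pad.ball w G z (γ * Δ) ⊆ (buildP ω).cl z
      · have hmem : ω ∈ buildP ⁻¹' {Pp : Pad.Partition V | Pad.ball w G z (γ * Δ) ⊆ Pp.cl z} := h
        rw [Set.indicator_of_mem hmem, if_pos h, PMF.ofFintype_apply]
      · have hmem : ω ∉ buildP ⁻¹' {Pp : Pad.Partition V | Pad.ball w G z (γ * Δ) ⊆ Pp.cl z} := h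
        rw [Set.indicator_of_notMem hmem, if_neg h]
    rw [hmeas]
    apply ENNReal.ofReal_le_ofReal
    rcases lt_or_ge (γ * Δ) dpos with hcase | hcase
    · -- trivial case: the ball is a zero-distance class
      have hall : ∀ ω : V → Fin (K+1), Pad.ball w G z (γ * Δ) ⊆ (buildP ω).cl z := by
        intro ω y hy
        have hy' : Pad.wdist w G z y ≤ γ * Δ := hy
        have hy0 : Pad.wdist w G z y = 0 := by
          rcases (wdist_nonneg G w hw z y).lt_or_eq with h | h
          · exfalso
            have := hdmin z y h
            linarith
          · exact h.symm
        have hyz : Pad.wdist w G y z = 0 := by rw [wdist_symm G w y z]; exact hy0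
        rw [hclP ω z]
        show Sm ω y = Sm ω z
        have hbfeq : bf y = bf z := by
          funext v
          rw [hbf]
          simp only
          have t1 := wdist_triangle G w hG hw v z y
          have t2 := wdist_triangle G w hG hw v y z
          have h1 : Pad.wdist w G v y = Pad.wdist w G v z := by linarith
          rw [h1]
        rw [hSm]
        simp only [hbfeq]
      rw [Finset.filter_true_of_mem (fun ω _ => hall ω), omass_sum hq0 hq1]
      rw [← Real.exp_zero]
      apply Real.exp_le_exp.mpr
      nlinarith
    · -- main case
      have hγpos : 0 < γ := by nlinarith
      set t : ℝ := 2 * (γ * Δ) with htdef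
      have ht0 : 0 < t := by rw [htdef]; positivity
      set s : ℕ := ⌈t / ε⌉₊ with hsdef
      have hs1 : 1 ≤ s := by
        rw [hsdef]
        exact Nat.one_le_iff_ne_zero.mpr (Nat.pos_iff_ne_zero.mp
          (Nat.ceil_pos.mpr (by positivity)))
      have hεt : ε ≤ γ * Δ := by linarith
      have hst : t ≤ ε * s := by
        have h := Nat.le_ceil (t / ε)
        rw [← hsdef] at h
        calc t = (t / ε) * ε := by field_simp
          _ ≤ (s:ℝ) * ε := mul_le_mul_of_nonneg_right h hεpos.le
          _ = ε * s := mul_comm _ _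
      have hsc1 : (s:ℝ) * ε ≤ t + ε := by
        have h := Nat.ceil_lt_add_one (show (0:ℝ) ≤ t / ε by positivity)
        rw [← hsdef] at h
        have h2 : (s:ℝ) ≤ t/ε + 1 := h.le
        calc (s:ℝ) * ε ≤ (t/ε + 1) * ε := mul_le_mul_of_nonneg_right h2 hεpos.le
          _ = t + ε := by field_simp
      have hKε : (K:ℝ) * ε = Δ / 8 := by rw [mul_comm]; exact hεK
      have hsK : s ≤ K := by
        have h1 : (s:ℝ) * ε < (K:ℝ) * ε := by
          have ha : t + ε ≤ 3 * (γ * Δ) := by linarith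
          have hb : 3 * (γ * Δ) < Δ / 8 := by nlinarith
          linarith
        have h2 : (s:ℝ) < (K:ℝ) := lt_of_mul_lt_mul_right h1 hεpos.le
        exact_mod_cast h2.le
      set Nz : Finset V := N.filter (fun u => Pad.wdist w G z u ≤ Δ / 2) with hNzdef
      have hfar : ∀ u ∈ N, ∀ ω : V → Fin (K+1), Vwin K ε (bf z) N u ω → u ∈ Nz := by
        intro u huN ω hV
        rw [hNzdef, Finset.mem_filter]
        refine ⟨huN, ?_⟩
        obtain ⟨u₀, hu₀N, hu₀z⟩ := hcov z
        have hs0 : (0:ℝ) ≤ score K ε (bf z) u₀ ω := by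
          simp only [score, hbf]
          have h1 : (0:ℝ) ≤ η * (ι u₀ : ℝ) := by positivity
          have h2 : (0:ℝ) ≤ ε * ((ω u₀ : ℕ) : ℝ) := by positivity
          linarith
        have hsu : (0:ℝ) ≤ score K ε (bf z) u ω := by
          by_cases h : u = u₀
          · rw [h]; exact hs0
          · have := hV u₀ hu₀N (fun hh => h hh.symm)
            linarith
        have h1 : η * (ι u : ℝ) ≤ Δ / 8 := hηb u
        have h2 : ε * ((ω u : ℕ) : ℝ) ≤ Δ / 8 := by
          have hle : ((ω u : ℕ) : ℝ) ≤ (K : ℝ) := by exact_mod_cast (Fin.is_le (ω u))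
          calc ε * ((ω u : ℕ) : ℝ) ≤ ε * K := mul_le_mul_of_nonneg_left hle hεpos.le
            _ = Δ / 8 := hεK
        simp only [score, hbf] at hsu
        rw [wdist_symm G w z u]
        linarith
      have hpad : ∀ (ω : V → Fin (K+1)) (u : V), u ∈ Nz → Gwin K ε t (bf z) N u ω →
          Pad.ball w G z (γ * Δ) ⊆ (buildP ω).cl z := by
        intro ω u huNz hGw
        have huN : u ∈ N := (Finset.mem_filter.1 (hNzdef ▸ huNz)).1
        intro y hy
        have hy' : Pad.wdist w G z y ≤ γ * Δ := hy
        have hyz : Pad.wdist w G y z ≤ γ * Δ := by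
          rw [wdist_symm G w y z]; exact hy'
        have huz : u ∈ Sm ω z := by
          rw [hSm, Set.mem_setOf_eq]
          refine ⟨huN, ?_⟩
          intro v hv
          by_cases hvu : v = u
          · rw [hvu]
          · have := hGw v hv hvu
            linarith
        have huy : u ∈ Sm ω y := by
          rw [hSm, Set.mem_setOf_eq]
          refine ⟨huN, ?_⟩
          intro v hv
          by_cases hvu : v = u
          · rw [hvu]
          · have hgw := hGw v hv hvu
            have t1 : Pad.wdist w G v z ≤ Pad.wdist w G v y + Pad.wdist w G y z :=
              wdist_triangle G w hG hw v y z
            have t2 : Pad.wdist w G u y ≤ Pad.wdist w G u z + Pad.wdist w G z y :=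
              wdist_triangle G w hG hw u z y
            simp only [score, hbf] at hgw ⊢
            rw [htdef] at hgw
            linarith
        rw [hclP ω z]
        show Sm ω y = Sm ω z
        exact hSeq ω y z u huy huz
      have hcore := core_bound hq0 hq1 hs1 hsK hεpos ht0 hst (hnotie z) hNne
        (hNzdef ▸ Finset.filter_subset _ N) hfar
        (fun ω => Pad.ball w G z (γ * Δ) ⊆ (buildP ω).cl z) hpad
      -- numeric estimates
      set x : ℝ := lam * t with hxdef
      have hxval : x = 96 * ddim * γ := by
        rw [hxdef, hlamdef, htdef]
        field_simp
        ring
      have hx0 : 0 < x := by rw [hxdef]; positivity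
      have hx4 : x ≤ ddim / 4 := by rw [hxval]; nlinarith
      have hqs : Real.exp (-(2*x)) ≤ q ^ s := by
        have hqpow : q ^ s = Real.exp ((s:ℝ) * (-(lam * ε))) := by
          rw [hqdef, Real.exp_nat_mul]
        rw [hqpow]
        apply Real.exp_le_exp.mpr
        have h1 : lam * ((s:ℝ) * ε) ≤ lam * (2 * t) :=
          mul_le_mul_of_nonneg_left (by linarith) hlam.le
        rw [hxdef]
        nlinarith
      have hb1 : 1 - q ≤ lam * ε := by
        have := Real.add_one_le_exp (-(lam*ε))
        rw [← hqdef] at this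
        linarith
      have hq6 : q ^ K = Real.exp (-(6 * ddim)) := by
        rw [hqdef, ← Real.exp_nat_mul]
        congr 1
        rw [show (K:ℝ) * -(lam * ε) = -(lam * (ε * K)) by ring, hεK, hlamdef]
        field_simp
        ring
      have hqK1 : q ^ (K+1) ≤ Real.exp (-(6 * ddim)) := by
        rw [pow_succ, ← hq6]
        nlinarith [pow_pos hq0 K, pow_nonneg hq0.le K]
      have hqK1' : q ^ (K+1) ≤ 1/2 := by
        have h1 : Real.exp (-(6*ddim)) ≤ Real.exp (-(6:ℝ)) :=
          Real.exp_le_exp.mpr (by nlinarith)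
        have h7 : (7:ℝ) ≤ Real.exp 6 := by linarith [Real.add_one_le_exp (6:ℝ)]
        have h2 : Real.exp (-(6:ℝ)) ≤ 1/7 := by
          rw [Real.exp_neg]
          calc (Real.exp 6)⁻¹ ≤ (7:ℝ)⁻¹ := inv_anti₀ (by norm_num) h7
            _ = 1/7 := by norm_num
        linarith
      have hβ : (s:ℝ) * (1-q) * q^(K+1) / (1 - q^(K+1)) ≤ 4 * x * Real.exp (-(6*ddim)) := by
        have hnum1 : (s:ℝ) * (1-q) ≤ 2 * x := by
          have h1 : (s:ℝ) * (1-q) ≤ (s:ℝ) * (lam * ε) :=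
            mul_le_mul_of_nonneg_left hb1 (by positivity)
          have h3 : lam * ((s:ℝ)*ε) ≤ lam * (2*t) :=
            mul_le_mul_of_nonneg_left (by linarith) hlam.le
          rw [hxdef]
          nlinarith
        have hnum0 : (0:ℝ) ≤ (s:ℝ) * (1-q) := mul_nonneg (by positivity) (by linarith)
        have hnum2 : (s:ℝ) * (1-q) * q^(K+1) ≤ 2 * x * Real.exp (-(6*ddim)) :=
          mul_le_mul hnum1 hqK1 (pow_nonneg hq0.le _) (by positivity)
        have hden : (1:ℝ)/2 ≤ 1 - q^(K+1) := by linarith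
        have hdenpos : (0:ℝ) < 1 - q^(K+1) := by linarith
        calc (s:ℝ) * (1-q) * q^(K+1) / (1 - q^(K+1))
            ≤ (2 * x * Real.exp (-(6*ddim))) / (1 - q^(K+1)) := by
              apply div_le_div_of_nonneg_right hnum2 hdenpos.le
          _ ≤ (2 * x * Real.exp (-(6*ddim))) / (1/2) := by
              apply div_le_div_of_nonneg_left (by positivity) (by norm_num) hden
          _ = 4 * x * Real.exp (-(6*ddim)) := by ring
      have hcard : ((Nz.card:ℕ):ℝ) ≤ Real.exp (2*ddim) := by
        have hp := packing_bound hG hw hdoub hΔ hsep z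
        have h2e : (2:ℝ) ≤ Real.exp 1 := by linarith [Real.add_one_le_exp (1:ℝ)]
        have h2d : (2:ℝ)^ddim ≤ Real.exp ddim := by
          have := Real.rpow_le_rpow (x := 2) (y := Real.exp 1) (z := ddim)
            (by norm_num) h2e (by linarith)
          rwa [Real.exp_one_rpow] at this
        have hrpos : (0:ℝ) ≤ (2:ℝ)^ddim := (Real.rpow_pos_of_pos (by norm_num) _).le
        calc ((Nz.card:ℕ):ℝ) ≤ (2:ℝ)^ddim * (2:ℝ)^ddim := by rw [hNzdef]; exact hp
          _ ≤ Real.exp ddim * Real.exp ddim := by nlinarith [Real.exp_pos ddim]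
          _ = Real.exp (2*ddim) := by rw [← Real.exp_add]; ring_nf
      have hβ0 : (0:ℝ) ≤ (s:ℝ) * (1-q) * q^(K+1) / (1 - q^(K+1)) := by
        have hdenpos : (0:ℝ) < 1 - q^(K+1) := by linarith
        have hnum0 : (0:ℝ) ≤ (s:ℝ) * (1-q) * q^(K+1) :=
          mul_nonneg (mul_nonneg (by positivity) (by linarith)) (pow_nonneg hq0.le _)
        positivity
      have hcardβ : (Nz.card:ℝ) * ((s:ℝ) * (1-q) * q^(K+1) / (1 - q^(K+1)))
          ≤ 4 * x * Real.exp (-(4*ddim)) := by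
        calc (Nz.card:ℝ) * ((s:ℝ) * (1-q) * q^(K+1) / (1 - q^(K+1)))
            ≤ Real.exp (2*ddim) * (4 * x * Real.exp (-(6*ddim))) :=
              mul_le_mul hcard hβ hβ0 (Real.exp_pos _).le
          _ = 4 * x * (Real.exp (2*ddim) * Real.exp (-(6*ddim))) := by ring
          _ = 4 * x * Real.exp (-(4*ddim)) := by rw [← Real.exp_add]; ring_nf
      have hfinal := padnum hddim hx0 hx4
      have h8 : Real.exp (-(768 * ddim * γ)) = Real.exp (-(8*x)) := by
        rw [hxval]; ring_nf
      rw [h8]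
      linarith [hcore, hqs, hcardβ, hfinal]
end EE
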